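/- Let |ψ⟩ be a unit vector in H = ⊗_a H_a and N a neighborhood structure. Suppose there exists a Hermitian operator W that is quasi-local relative to N (i.e., W = Σ_k W_{N_k} ⊗ I_{N_k^c}) such that ⟨ψ|W|ψ⟩ < ⟨φ|W|φ⟩ for every unit vector |φ⟩ in the DQLS subspace H_N(|ψ⟩) with |φ⟩⟨φ| ≠ |ψ⟩⟨ψ|. Then |ψ⟩⟨ψ| is the unique density operator whose reduced states on all neighborhoods in N agree with those of |ψ⟩⟨ψ| (i.e., |ψ⟩ is UDA relative to N). -/

import Mathlib

open Matrix ComplexOrder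

variable {A : Type*} [Fintype A] [DecidableEq A]
variable {ι : A → Type*} [∀ a, Fintype (ι a)] [∀ a, DecidableEq (ι a)]

/-- Combine an assignment on a neighborhood `S` with one on its complement. -/
def glue (S : Finset A) (f : ∀ a : {a // a ∈ S}, ι a) (g : ∀ a : {a // a ∉ S}, ι a) :
    ∀ a, ι a := fun a => if h : a ∈ S then f ⟨a, h⟩ else g ⟨a, h⟩

/-- The reduced density matrix of `ρ` on the neighborhood `S` (partial trace over `Sᶜ`). -/
noncomputable def rdm (S : Finset A) (ρ : Matrix (∀ a, ι a) (∀ a, ι a) ℂ) :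
    Matrix (∀ a : {a // a ∈ S}, ι a) (∀ a : {a // a ∈ S}, ι a) ℂ :=
  fun f f' => ∑ g : ∀ a : {a // a ∉ S}, ι a, ρ (glue S f g) (glue S f' g)

/-- Embed an operator on the neighborhood `S` as `M ⊗ I_{Sᶜ}` on the full space. -/
noncomputable def liftN (S : Finset A)
    (M : Matrix (∀ a : {a // a ∈ S}, ι a) (∀ a : {a // a ∈ S}, ι a) ℂ) :
    Matrix (∀ a, ι a) (∀ a, ι a) ℂ :=
  fun i j =>
    if ∀ a : {a // a ∉ S}, i a.1 = j a.1 then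
      M (fun a => i a.1) (fun a => j a.1) else 0

set_option linter.unusedSectionVars false
set_option maxHeartbeats 1000000
set_option linter.unusedVariables false


lemma herm_range_le {n : Type*} [Fintype n] [DecidableEq n]
    (A B : Matrix n n ℂ) (hA : A.IsHermitian) (hB : B.IsHermitian)
    (h : ∀ x, B.mulVec x = 0 → A.mulVec x = 0) :
    LinearMap.range A.mulVecLin ≤ LinearMap.range B.mulVecLin := by
  rintro _ ⟨z, rfl⟩
  simp only [mulVecLin_apply] at *
  set U : Matrix n n ℂ := (hB.eigenvectorUnitary : Matrix n n ℂ) with hU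
  set lam := hB.eigenvalues with hlam
  set y := A *ᵥ z with hy
  set c : n → ℂ := (star U) *ᵥ y with hc
  have hcol : ∀ i, lam i = 0 → A *ᵥ ⇑(hB.eigenvectorBasis i) = 0 := by
    intro i hi
    apply h
    rw [hB.mulVec_eigenvectorBasis, show hB.eigenvalues i = 0 from hi]
    simp
  have hczero : ∀ i, lam i = 0 → c i = 0 := by
    intro i hi
    have h1 : c i = star (⇑(hB.eigenvectorBasis i)) ⬝ᵥ y := by
      simp only [hc, mulVec, dotProduct, hU, Matrix.star_apply, Pi.star_apply,
        IsHermitian.eigenvectorUnitary_apply]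
    rw [h1, hy, dotProduct_mulVec, ← hA.eq, ← star_mulVec, hcol i hi]
    simp
  refine ⟨U *ᵥ (fun i => (if lam i = 0 then 0 else ((lam i : ℂ))⁻¹) * c i), ?_⟩
  rw [mulVecLin_apply]
  conv_lhs => rw [hB.spectral_theorem, Unitary.conjStarAlgAut_apply]
  rw [← hU, ← mulVec_mulVec, ← mulVec_mulVec]
  rw [mulVec_mulVec _ (star U) U,
    show star U * U = 1 by rw [hU]; exact mem_unitaryGroup_iff'.mp hB.eigenvectorUnitary.2,
    one_mulVec]
  have hd : (diagonal (RCLike.ofReal ∘ lam)) *ᵥ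
      (fun i => (if lam i = 0 then 0 else ((lam i : ℂ))⁻¹) * c i) = c := by
    ext i
    simp only [mulVec_diagonal, Function.comp]
    by_cases hi : lam i = 0
    · simp [hi, hczero i hi]
    · have : (lam i : ℂ) ≠ 0 := by exact_mod_cast hi
      rw [if_neg hi, ← mul_assoc]
      simp [hi]
  rw [hd, hc, mulVec_mulVec,
    show U * star U = 1 by rw [hU]; exact mem_unitaryGroup_iff.mp hB.eigenvectorUnitary.2,
    one_mulVec]

lemma glue_apply_mem {S : Finset A} {f : ∀ a : {a // a ∈ S}, ι a}
    {g : ∀ a : {a // a ∉ S}, ι a} (a : {a // a ∈ S}) : glue S f g a.1 = f a := by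
  obtain ⟨a, ha⟩ := a; simp [glue, ha]

lemma glue_apply_not_mem {S : Finset A} {f : ∀ a : {a // a ∈ S}, ι a}
    {g : ∀ a : {a // a ∉ S}, ι a} (a : {a // a ∉ S}) : glue S f g a.1 = g a := by
  obtain ⟨a, ha⟩ := a; simp [glue, ha]

lemma glue_res_mem (S : Finset A) (f : ∀ a : {a // a ∈ S}, ι a) (g : ∀ a : {a // a ∉ S}, ι a) :
    (fun a : {a // a ∈ S} => glue S f g a.1) = f :=
  funext fun a => glue_apply_mem a

lemma glue_res_not_mem (S : Finset A) (f : ∀ a : {a // a ∈ S}, ι a)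
    (g : ∀ a : {a // a ∉ S}, ι a) :
    (fun a : {a // a ∉ S} => glue S f g a.1) = g :=
  funext fun a => glue_apply_not_mem a

/-- Splitting a sum over all configurations into neighborhood × complement. -/
lemma sum_glue (S : Finset A) (F : (∀ a, ι a) → ℂ) :
    ∑ i, F i = ∑ f : ∀ a : {a // a ∈ S}, ι a, ∑ g : ∀ a : {a // a ∉ S}, ι a,
      F (glue S f g) := by
  rw [← Equiv.sum_comp (Equiv.piEquivPiSubtypeProd (· ∈ S) ι).symm F,
    Fintype.sum_prod_type]
  rfl

lemma liftN_glue (S : Finset A)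
    (M : Matrix (∀ a : {a // a ∈ S}, ι a) (∀ a : {a // a ∈ S}, ι a) ℂ)
    (f f' : ∀ a : {a // a ∈ S}, ι a) (g g' : ∀ a : {a // a ∉ S}, ι a) :
    liftN S M (glue S f g) (glue S f' g') = if g = g' then M f f' else 0 := by
  unfold liftN
  rw [glue_res_mem, glue_res_mem]
  congr 1
  simp only [eq_iff_iff]
  constructor
  · intro h
    funext a
    have := h a
    rwa [glue_apply_not_mem a, glue_apply_not_mem a] at this
  · intro h a
    subst h
    rw [glue_apply_not_mem a, glue_apply_not_mem a]

lemma trace_liftN_mul (S : Finset A)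
    (M : Matrix (∀ a : {a // a ∈ S}, ι a) (∀ a : {a // a ∈ S}, ι a) ℂ)
    (σ : Matrix (∀ a, ι a) (∀ a, ι a) ℂ) :
    trace (liftN S M * σ) = trace (M * rdm S σ) := by
  rw [trace, trace]
  simp only [diag_apply, mul_apply, rdm, Finset.mul_sum]
  calc
    ∑ i, ∑ j, liftN S M i j * σ j i
      = ∑ f, ∑ g, ∑ j, liftN S M (glue S f g) j * σ j (glue S f g) :=
        sum_glue S _
    _ = ∑ f, ∑ g, ∑ f', ∑ g', liftN S M (glue S f g) (glue S f' g')
          * σ (glue S f' g') (glue S f g) := by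
        refine Finset.sum_congr rfl fun f _ => Finset.sum_congr rfl fun g _ => ?_
        exact sum_glue S _
    _ = ∑ f, ∑ g, ∑ f', M f f' * σ (glue S f' g) (glue S f g) := by
        refine Finset.sum_congr rfl fun f _ => Finset.sum_congr rfl fun g _ =>
          Finset.sum_congr rfl fun f' _ => ?_
        simp [liftN_glue, ite_mul, Finset.sum_ite_eq]
    _ = ∑ f, ∑ f', ∑ g, M f f' * σ (glue S f' g) (glue S f g) := by
        exact Finset.sum_congr rfl fun f _ => Finset.sum_comm

lemma rdm_isHermitian {S : Finset A} {σ : Matrix (∀ a, ι a) (∀ a, ι a) ℂ}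
    (h : σ.IsHermitian) : (rdm S σ).IsHermitian := by
  ext f f'
  simp only [conjTranspose_apply, rdm, star_sum]
  exact Finset.sum_congr rfl fun g _ => h.apply _ _

lemma liftN_isHermitian {S : Finset A}
    {M : Matrix (∀ a : {a // a ∈ S}, ι a) (∀ a : {a // a ∈ S}, ι a) ℂ}
    (h : M.IsHermitian) : (liftN S M).IsHermitian := by
  ext i j
  simp only [conjTranspose_apply, liftN]
  by_cases hc : ∀ a : {a // a ∉ S}, i a.1 = j a.1
  · rw [if_pos hc, if_pos (fun a => (hc a).symm), h.apply]
  · rw [if_neg hc, if_neg (fun hc' => hc fun a => (hc' a).symm), star_zero]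

lemma trace_mul_vecMulVec {n : Type*} [Fintype n] (W : Matrix n n ℂ) (φ : n → ℂ) :
    trace (W * vecMulVec φ (star φ)) = star φ ⬝ᵥ W *ᵥ φ := by
  simp only [trace, diag_apply, mul_apply, vecMulVec_apply, dotProduct, mulVec,
    Pi.star_apply, Finset.mul_sum]
  exact Finset.sum_congr rfl fun i _ => Finset.sum_congr rfl fun j _ => by ring

lemma glue_eta (S : Finset A) (i : ∀ a, ι a) :
    glue S (fun a : {a // a ∈ S} => i a.1) (fun a : {a // a ∉ S} => i a.1) = i := by
  funext a
  unfold glue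
  split <;> rfl


lemma sigma_mulVec_eq_zero (S : Finset A) (σ : Matrix (∀ a, ι a) (∀ a, ι a) ℂ)
    (hσ : σ.PosSemidef) (x : (∀ a, ι a) → ℂ)
    (hx : (liftN S (rdm S σ)) *ᵥ x = 0) : σ *ᵥ x = 0 := by
  classical
  set v : (∀ a : {a // a ∉ S}, ι a) → (∀ a : {a // a ∉ S}, ι a) → (∀ a, ι a) → ℂ :=
    fun g g' i => if (fun a : {a // a ∉ S} => i a.1) = g' then
      x (glue S (fun a : {a // a ∈ S} => i a.1) g) else 0 with hv
  have hvglue : ∀ g g' (f : ∀ a : {a // a ∈ S}, ι a) (k : ∀ a : {a // a ∉ S}, ι a),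
      v g g' (glue S f k) = if k = g' then x (glue S f g) else 0 := by
    intro g g' f k
    rw [hv]
    simp only [glue_res_not_mem, glue_res_mem]
  set D : (∀ a : {a // a ∉ S}, ι a) → (∀ a : {a // a ∉ S}, ι a) → ℂ :=
    fun g g' => ∑ f, ∑ f', star (x (glue S f g)) *
      (σ (glue S f g') (glue S f' g') * x (glue S f' g)) with hD
  have hA : ∀ g g', star (v g g') ⬝ᵥ σ *ᵥ (v g g') = D g g' := by
    intro g g'
    simp only [dotProduct, mulVec, Pi.star_apply, Finset.mul_sum]
    rw [sum_glue S]
    refine Eq.trans (Finset.sum_congr rfl fun f _ => Finset.sum_congr rfl fun k _ =>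
      sum_glue S _) ?_
    simp only [hvglue, hD]
    simp only [apply_ite star, star_zero, ite_mul, mul_ite, mul_zero, zero_mul,
      Finset.sum_ite_eq', Finset.mem_univ, if_true]
    refine Finset.sum_congr rfl fun f _ => ?_
    rw [Finset.sum_comm]
    refine Finset.sum_congr rfl fun f' _ => ?_
    rw [Finset.sum_ite_eq']
    simp
  have hB : star x ⬝ᵥ (liftN S (rdm S σ)) *ᵥ x = ∑ g, ∑ g', D g g' := by
    simp only [dotProduct, mulVec, Pi.star_apply, Finset.mul_sum]
    rw [sum_glue S]
    refine Eq.trans (Finset.sum_congr rfl fun f _ => Finset.sum_congr rfl fun g _ =>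
      sum_glue S _) ?_
    simp only [liftN_glue, ite_mul, mul_ite, mul_zero, zero_mul,
      Finset.sum_ite_eq, Finset.sum_ite_eq', Finset.mem_univ, if_true]
    simp only [rdm, Finset.sum_mul, Finset.mul_sum, hD]
    rw [Finset.sum_comm]
    refine Finset.sum_congr rfl fun g _ => ?_
    refine Eq.trans (Finset.sum_congr rfl fun f _ => Finset.sum_comm) ?_
    exact Finset.sum_comm
  have hxsum : x = ∑ g, v g g := by
    funext i
    have h0 : (∑ g, v g g) i = ∑ g, v g g i := by simp
    rw [h0]
    simp only [hv]
    rw [Finset.sum_ite_eq]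
    simp [glue_eta]
  have hzero : ∑ g, ∑ g', D g g' = 0 := by
    rw [← hB, hx, dotProduct_zero]
  have hnonneg : ∀ g g', 0 ≤ D g g' := fun g g' => hA g g' ▸ hσ.dotProduct_mulVec_nonneg (v g g')
  have hdiag : ∀ g, D g g = 0 := by
    intro g
    have h1 : ∀ g ∈ (Finset.univ : Finset (∀ a : {a // a ∉ S}, ι a)),
        (0:ℂ) ≤ ∑ g', D g g' :=
      fun g _ => Finset.sum_nonneg fun g' _ => hnonneg g g'
    have h2 := (Finset.sum_eq_zero_iff_of_nonneg h1).mp hzero g (Finset.mem_univ g)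
    exact (Finset.sum_eq_zero_iff_of_nonneg
      (fun g' _ => hnonneg g g')).mp h2 g (Finset.mem_univ g)
  have hker : ∀ g, σ *ᵥ v g g = 0 := fun g =>
    (hσ.dotProduct_mulVec_zero_iff (v g g)).mp ((hA g g).trans (hdiag g))
  rw [hxsum]
  have hms : σ *ᵥ (∑ g, v g g) = ∑ g, σ *ᵥ (v g g) := by
    have := map_sum σ.mulVecLin (fun g => v g g) Finset.univ
    simpa only [mulVecLin_apply] using this
  rw [hms]
  simp [hker]


lemma trace_vecMulVec_star {n : Type*} [Fintype n] (φ : n → ℂ) :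
    trace (vecMulVec φ (star φ)) = star φ ⬝ᵥ φ := by
  simp only [trace, diag_apply, vecMulVec_apply, dotProduct, Pi.star_apply]
  exact Finset.sum_congr rfl fun i _ => mul_comm _ _

lemma spectral_rankone {n : Type*} [Fintype n] [DecidableEq n] {σ : Matrix n n ℂ}
    (hσ : σ.IsHermitian) :
    σ = ∑ i, (hσ.eigenvalues i : ℂ) •
      vecMulVec (⇑(hσ.eigenvectorBasis i)) (star ⇑(hσ.eigenvectorBasis i)) := by
  conv_lhs => rw [hσ.spectral_theorem, Unitary.conjStarAlgAut_apply]
  ext a b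
  simp only [Matrix.sum_apply, Pi.smul_apply, smul_eq_mul, vecMulVec_apply, mul_apply,
    diagonal_apply, Function.comp_apply, Matrix.star_apply, Pi.star_apply,
    IsHermitian.eigenvectorUnitary_apply, ite_mul, zero_mul, mul_ite, mul_zero,
    Finset.sum_ite_eq, Finset.sum_ite_eq', Finset.mem_univ, if_true]
  refine Finset.sum_congr rfl fun i _ => ?_
  rw [Matrix.smul_apply, vecMulVec_apply, smul_eq_mul, Pi.star_apply]
  rw [mul_right_comm, mul_comm]
  rfl

lemma eigvec_unit {n : Type*} [Fintype n] [DecidableEq n] {σ : Matrix n n ℂ}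
    (hσ : σ.IsHermitian) (i : n) :
    star ⇑(hσ.eigenvectorBasis i) ⬝ᵥ ⇑(hσ.eigenvectorBasis i) = 1 := by
  have h1 := hσ.eigenvectorBasis.orthonormal.1 i
  have h2 : (inner ℂ (hσ.eigenvectorBasis i) (hσ.eigenvectorBasis i) : ℂ)
      = star ⇑(hσ.eigenvectorBasis i) ⬝ᵥ ⇑(hσ.eigenvectorBasis i) := by
    rw [EuclideanSpace.inner_eq_star_dotProduct, dotProduct_comm]
  rw [← h2, inner_self_eq_norm_sq_to_K, h1]
  norm_num


/-- if a quasi-local Hermitian observable W attains its strict minimum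
expectation over the DQLS subspace of |ψ⟩ uniquely at |ψ⟩, then |ψ⟩ is UDA. -/
theorem UDA_witness {K : Type*} [Fintype K] (Nhd : K → Finset A)
    (ψ : (∀ a, ι a) → ℂ) (hψ : star ψ ⬝ᵥ ψ = 1)
    (W : Matrix (∀ a, ι a) (∀ a, ι a) ℂ) (hherm : W.IsHermitian)
    (hQL : ∃ Wk : ∀ k, Matrix (∀ a : {a // a ∈ Nhd k}, ι a) (∀ a : {a // a ∈ Nhd k}, ι a) ℂ,
      W = ∑ k, liftN (Nhd k) (Wk k))
    (hwit : ∀ φ : (∀ a, ι a) → ℂ,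
      φ ∈ (⨅ k, LinearMap.range
        (liftN (Nhd k) (rdm (Nhd k) (vecMulVec ψ (star ψ)))).mulVecLin) →
      star φ ⬝ᵥ φ = 1 → vecMulVec φ (star φ) ≠ vecMulVec ψ (star ψ) →
      (star ψ ⬝ᵥ W.mulVec ψ).re < (star φ ⬝ᵥ W.mulVec φ).re) :
    ∀ σ : Matrix (∀ a, ι a) (∀ a, ι a) ℂ, σ.PosSemidef → σ.trace = 1 →
      (∀ k, rdm (Nhd k) σ = rdm (Nhd k) (vecMulVec ψ (star ψ))) →
      σ = vecMulVec ψ (star ψ) := by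
  intro σ hPSD htr hrdm
  classical
  obtain ⟨Wk, hW⟩ := hQL
  set ρ := vecMulVec ψ (star ψ) with hρ
  have hσh : σ.IsHermitian := hPSD.1
  set lam := hσh.eigenvalues with hlam
  set u : (∀ a, ι a) → (∀ a, ι a) → ℂ := fun i => ⇑(hσh.eigenvectorBasis i) with hu
  have hdecomp : σ = ∑ i, (lam i : ℂ) • vecMulVec (u i) (star (u i)) :=
    spectral_rankone hσh
  have hunit : ∀ i, star (u i) ⬝ᵥ u i = 1 := fun i => eigvec_unit hσh i
  have htrWσρ : trace (W * σ) = trace (W * ρ) := by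
    rw [hW, Finset.sum_mul, Finset.sum_mul, trace_sum, trace_sum]
    exact Finset.sum_congr rfl fun k _ => by
      rw [trace_liftN_mul, trace_liftN_mul, hrdm k]
  have hsum1 : ∑ i, (lam i : ℂ) = 1 := by
    rw [hdecomp] at htr
    rw [trace_sum] at htr
    simp only [trace_smul, trace_vecMulVec_star, hunit, smul_eq_mul, mul_one] at htr
    exact htr
  have hsum1R : ∑ i, lam i = 1 := by
    have := hsum1
    push_cast at this
    exact_mod_cast this
  have hlamnn : ∀ i, 0 ≤ lam i := fun i => hPSD.eigenvalues_nonneg i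
  -- membership of eigenvectors with nonzero eigenvalue in the DQLS subspace
  have hmem : ∀ i, lam i ≠ 0 →
      u i ∈ ⨅ k, LinearMap.range (liftN (Nhd k) (rdm (Nhd k) ρ)).mulVecLin := by
    intro i hi
    rw [Submodule.mem_iInf]
    intro k
    have hrange : u i ∈ LinearMap.range σ.mulVecLin := by
      refine ⟨(lam i : ℂ)⁻¹ • u i, ?_⟩
      rw [mulVecLin_apply, mulVec_smul]
      rw [show σ *ᵥ u i = lam i • u i from hσh.mulVec_eigenvectorBasis i]
      rw [show lam i • u i = (lam i : ℂ) • u i from rfl]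
      rw [smul_smul, inv_mul_cancel₀ (by exact_mod_cast hi), one_smul]
    have hτh : (liftN (Nhd k) (rdm (Nhd k) σ)).IsHermitian :=
      liftN_isHermitian (rdm_isHermitian hσh)
    have hincl := herm_range_le σ (liftN (Nhd k) (rdm (Nhd k) σ)) hσh hτh
      (fun x hx => sigma_mulVec_eq_zero (Nhd k) σ hPSD x hx)
    rw [← hrdm k]
    exact hincl hrange
  -- expectation decomposition
  have hexp : trace (W * σ) = ∑ i, (lam i : ℂ) * (star (u i) ⬝ᵥ W *ᵥ u i) := by
    rw [hdecomp, Finset.mul_sum, trace_sum]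
    refine Finset.sum_congr rfl fun i _ => ?_
    rw [mul_smul_comm, trace_smul, trace_mul_vecMulVec]
    rfl
  have hEψ : trace (W * ρ) = star ψ ⬝ᵥ W *ᵥ ψ := trace_mul_vecMulVec W ψ
  -- every eigenvector with positive weight gives the state ρ
  have hkey : ∀ i, lam i ≠ 0 → vecMulVec (u i) (star (u i)) = ρ := by
    by_contra hcon
    push_neg at hcon
    obtain ⟨i0, hi0, hne⟩ := hcon
    have hEge : ∀ i, lam i ≠ 0 →
        (star ψ ⬝ᵥ W *ᵥ ψ).re ≤ (star (u i) ⬝ᵥ W *ᵥ u i).re := by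
      intro i hi
      by_cases hvv : vecMulVec (u i) (star (u i)) = ρ
      · have : star (u i) ⬝ᵥ W *ᵥ u i = star ψ ⬝ᵥ W *ᵥ ψ := by
          rw [← trace_mul_vecMulVec W (u i), hvv, hρ, trace_mul_vecMulVec]
        rw [this]
      · exact le_of_lt (hwit (u i) (hmem i hi) (hunit i) hvv)
    have hEgt : (star ψ ⬝ᵥ W *ᵥ ψ).re < (star (u i0) ⬝ᵥ W *ᵥ u i0).re :=
      hwit (u i0) (hmem i0 hi0) (hunit i0) hne
    have hre : (trace (W * σ)).re = ∑ i, lam i * (star (u i) ⬝ᵥ W *ᵥ u i).re := by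
      rw [hexp, Complex.re_sum]
      exact Finset.sum_congr rfl fun i _ => Complex.re_ofReal_mul _ _
    have hlt : ∑ i, lam i * (star ψ ⬝ᵥ W *ᵥ ψ).re
        < ∑ i, lam i * (star (u i) ⬝ᵥ W *ᵥ u i).re := by
      refine Finset.sum_lt_sum (fun i _ => ?_) ⟨i0, Finset.mem_univ i0, ?_⟩
      · by_cases hi : lam i = 0
        · rw [hi]; simp
        · exact mul_le_mul_of_nonneg_left (hEge i hi) (hlamnn i)
      · have hpos : 0 < lam i0 := lt_of_le_of_ne (hlamnn i0) (Ne.symm hi0)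
        exact mul_lt_mul_of_pos_left hEgt hpos
    rw [← Finset.sum_mul, hsum1R, one_mul] at hlt
    rw [← hre, htrWσρ, hEψ] at hlt
    exact lt_irrefl _ hlt
  -- conclude
  calc σ = ∑ i, (lam i : ℂ) • vecMulVec (u i) (star (u i)) := hdecomp
    _ = ∑ i, (lam i : ℂ) • ρ := by
        refine Finset.sum_congr rfl fun i _ => ?_
        by_cases hi : lam i = 0
        · rw [hi]; simp
        · rw [hkey i hi]
    _ = (∑ i, (lam i : ℂ)) • ρ := by rw [Finset.sum_smul]
    _ = ρ := by rw [hsum1, one_smul]
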